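/- Let φ be a primitive well-marked morphism over a finite alphabet A with Fst(φ_L) = Lst(φ_R) = Id, let u be a palindromic fixed point of φ, let w be the conjugate word of the relation φ_L ▷ φ_R, and define Φ : A* → A* by Φ(x) = φ_R(x)w. Then for every x ∈ L(u), the word Φ(x) belongs to L(u). -/

import Mathlib

namespace ZDC

variable {A : Type*}

/-- The finite word `u_i u_{i+1} ⋯ u_{i+n-1}` occurring at position `i` in `u`. -/
def factorAt (u : ℕ → A) (i n : ℕ) : List A := (List.range n).map (fun j => u (i + j))

/-- `w` occurs at index `i` in the infinite word `u`. -/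
def OccursAt (u : ℕ → A) (w : List A) (i : ℕ) : Prop := w = factorAt u i w.length

/-- The language of the infinite word `u`: the set of its factors. -/
def Lang (u : ℕ → A) : Set (List A) := {w | ∃ i, OccursAt u w i}

/-- The language of `u` is closed under reversal. -/
def ClosedUnderReversal (u : ℕ → A) : Prop := ∀ w ∈ Lang u, w.reverse ∈ Lang u

/-- Number of distinct palindromic factors of a finite word (the empty word counts). -/
noncomputable def palCount (w : List A) : ℕ := {v : List A | v <:+: w ∧ v.reverse = v}.ncard

/-- Palindromic defect of a finite word: `|w| + 1 - p(w)`. -/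
noncomputable def wordDefect (w : List A) : ℕ := w.length + 1 - palCount w

/-- Palindromic defect of an infinite word: sup of defects of its factors, in `ℕ∞`. -/
noncomputable def Defect (u : ℕ → A) : ℕ∞ := ⨆ w ∈ Lang u, (wordDefect w : ℕ∞)

/-- `u` contains infinitely many palindromic factors. -/
def Palindromic (u : ℕ → A) : Prop := ∀ N, ∃ w ∈ Lang u, N ≤ w.length ∧ w.reverse = w

/-- `u` is (purely) periodic: `u = zzz⋯` for a nonempty `z`. -/
def Periodic (u : ℕ → A) : Prop := ∃ p, 0 < p ∧ ∀ n, u (n + p) = u n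

/-- `u` is eventually periodic: `u = v zzz⋯`. -/
def EventuallyPeriodic (u : ℕ → A) : Prop := ∃ p, 0 < p ∧ ∃ N, ∀ n ≥ N, u (n + p) = u n

/-- `r` is a complete return word to `w` in `u`: it stretches from one occurrence of `w`
to the next one (inclusively). -/
def IsCompleteReturn (u : ℕ → A) (w r : List A) : Prop :=
  ∃ i j, i < j ∧ OccursAt u w i ∧ OccursAt u w j ∧
    (∀ k, i < k → k < j → ¬ OccursAt u w k) ∧
    r = factorAt u i (j + w.length - i)

/-- `c` is a complete mirror return to `w` in `u`. -/
def IsCompleteMirrorReturn (u : ℕ → A) (w c : List A) : Prop :=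
  c ∈ Lang u ∧
  ¬ w <:+: (c.drop 1).dropLast ∧ ¬ w.reverse <:+: (c.drop 1).dropLast ∧
  ((w <+: c ∧ w.reverse <:+ c) ∨ (w.reverse <+: c ∧ w <:+ c))

/-- Occurrences of `w` and its reversal alternate in `u`. -/
def Alternate (u : ℕ → A) (w : List A) : Prop :=
  (∀ i j, i < j → OccursAt u w i → OccursAt u w j →
    (∀ k, i < k → k < j → ¬ OccursAt u w k) →
    ∃ k, i ≤ k ∧ k ≤ j ∧ OccursAt u w.reverse k) ∧
  (∀ i j, i < j → OccursAt u w.reverse i → OccursAt u w.reverse j →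
    (∀ k, i < k → k < j → ¬ OccursAt u w.reverse k) →
    ∃ k, i ≤ k ∧ k ≤ j ∧ OccursAt u w k)

/-- Left extensions `E⁻(w)`. -/
def Eminus (u : ℕ → A) (w : List A) : Set A := {a | a :: w ∈ Lang u}

/-- Right extensions `E⁺(w)`. -/
def Eplus (u : ℕ → A) (w : List A) : Set A := {b | w ++ [b] ∈ Lang u}

/-- Bilateral extensions `E(w)`. -/
def Eboth (u : ℕ → A) (w : List A) : Set (A × A) := {p | p.1 :: (w ++ [p.2]) ∈ Lang u}

/-- Symmetric bilateral extensions `E⁼(w)`. -/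
def Esym (u : ℕ → A) (w : List A) : Set A := {a | a :: (w ++ [a]) ∈ Lang u}

/-- Bilateral multiplicity `m(w) = #E(w) − #E⁺(w) − #E⁻(w) + 1`. -/
noncomputable def mult (u : ℕ → A) (w : List A) : ℤ :=
  ((Eboth u w).ncard : ℤ) - (Eplus u w).ncard - (Eminus u w).ncard + 1

/-- `w` is a bispecial factor of `u`. -/
def Bispecial (u : ℕ → A) (w : List A) : Prop :=
  2 ≤ (Eminus u w).ncard ∧ 2 ≤ (Eplus u w).ncard

/-- The bipartite extension graph `Γ(w)` with vertex set `E⁻(w) ⊔ E⁺(w)`. -/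
def GammaGraph (u : ℕ → A) (w : List A) : SimpleGraph (↥(Eminus u w) ⊕ ↥(Eplus u w)) :=
  SimpleGraph.fromRel (fun x y =>
    ∃ (a : ↥(Eminus u w)) (b : ↥(Eplus u w)),
      x = Sum.inl a ∧ y = Sum.inr b ∧ ((a : A), (b : A)) ∈ Eboth u w)

/-- The graph `Θ(w)` on the vertex set `E⁻(w)` for a palindrome `w`. -/
def ThetaGraph (u : ℕ → A) (w : List A) : SimpleGraph (↥(Eminus u w)) :=
  SimpleGraph.fromRel (fun a b => ((a : A), (b : A)) ∈ Eboth u w)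

/-- Factor complexity `C(n)`. -/
noncomputable def complexity (u : ℕ → A) (n : ℕ) : ℕ :=
  {w ∈ Lang u | w.length = n}.ncard

/-- Palindromic complexity `P(n)`. -/
noncomputable def palComplexity (u : ℕ → A) (n : ℕ) : ℕ :=
  {w ∈ Lang u | w.length = n ∧ w.reverse = w}.ncard

/-- Extension of a morphism (given by its letter images) to finite words. -/
def Apply (φ : A → List A) (x : List A) : List A := x.flatMap φ

/-- A morphism is primitive if some power maps each letter to a word containing all letters. -/
def Primitive (φ : A → List A) : Prop :=
  ∃ k, 1 ≤ k ∧ ∀ a b : A, b ∈ (Apply φ)^[k] [a]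

/-- `u` is a fixed point of `φ`: the image of every prefix of `u` is again a prefix of `u`. -/
def IsFixedPoint (φ : A → List A) (u : ℕ → A) : Prop :=
  ∀ n, Apply φ (factorAt u 0 n) = factorAt u 0 (Apply φ (factorAt u 0 n)).length

/-- `ψ ▷ φ`: `ψ` is a left conjugate of `φ` with conjugate word `w`,
i.e. `φ(a)w = wψ(a)` for every letter `a`. -/
def LeftConj (ψ φ : A → List A) (w : List A) : Prop :=
  ∀ a, φ a ++ w = w ++ ψ a

/-- A morphism is cyclic if all images of letters are powers of a common word. -/
def Cyclic (φ : A → List A) : Prop :=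
  ∃ w : List A, ∀ a, ∃ k : ℕ, φ a = (List.replicate k w).flatten

/-- First letter (as an `Option`) of the image of a letter. -/
def Fst (φ : A → List A) : A → Option A := fun a => (φ a).head?

/-- Last letter (as an `Option`) of the image of a letter. -/
def Lst (φ : A → List A) : A → Option A := fun a => (φ a).getLast?

/-- `φL` is the leftmost conjugate of `φ`: a left conjugate whose first-letter map
is not constant. -/
def IsLeftmostConj (φL φ : A → List A) : Prop :=
  (∃ w, LeftConj φL φ w) ∧ ¬ (∀ a b, Fst φL a = Fst φL b)

/-- `φR` is the rightmost conjugate of `φ`: a right conjugate whose last-letter map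
is not constant. -/
def IsRightmostConj (φR φ : A → List A) : Prop :=
  (∃ w, LeftConj φ φR w) ∧ ¬ (∀ a b, Lst φR a = Lst φR b)

/-- A marked morphism: acyclic, and the first-letter map of its leftmost conjugate and
the last-letter map of its rightmost conjugate are injective. -/
def Marked (φ : A → List A) : Prop :=
  ¬ Cyclic φ ∧
  (∃ φL, IsLeftmostConj φL φ ∧ Function.Injective (Fst φL)) ∧
  (∃ φR, IsRightmostConj φR φ ∧ Function.Injective (Lst φR))

end ZDC


section Helpers
open ZDC
variable {A : Type*}

lemma factorAt_length (u : ℕ → A) (i n : ℕ) : (factorAt u i n).length = n := by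
  simp [factorAt]

lemma factorAt_add (u : ℕ → A) (i a b : ℕ) :
    factorAt u i (a + b) = factorAt u i a ++ factorAt u (i + a) b := by
  simp [factorAt, List.range_add, Function.comp, add_assoc]

lemma factorAt_one (u : ℕ → A) (i : ℕ) : factorAt u i 1 = [u i] := by
  simp [factorAt, List.range_succ]

lemma factorAt_mem_lang (u : ℕ → A) (i n : ℕ) : factorAt u i n ∈ Lang u :=
  ⟨i, by simp [OccursAt, factorAt_length]⟩

lemma occurs_of_factorAt_eq {u : ℕ → A} {i n : ℕ} {s v t : List A}
    (h : factorAt u i n = s ++ v ++ t) : OccursAt u v (i + s.length) := by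
  have hn : n = s.length + (v.length + t.length) := by
    have := congrArg List.length h
    simp [factorAt_length] at this
    omega
  rw [hn, factorAt_add, factorAt_add, List.append_assoc] at h
  obtain ⟨-, h2⟩ := List.append_inj h.symm (by simp [factorAt_length])
  obtain ⟨h3, -⟩ := List.append_inj h2 (by simp [factorAt_length])
  exact h3

lemma mem_lang_of_factorAt_eq {u : ℕ → A} {i n : ℕ} {s v t : List A}
    (h : factorAt u i n = s ++ v ++ t) : v ∈ Lang u :=
  ⟨i + s.length, occurs_of_factorAt_eq h⟩

lemma infix_mem_lang {u : ℕ → A} {x v : List A} (hx : x ∈ Lang u) (hv : v <:+: x) :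
    v ∈ Lang u := by
  obtain ⟨i, hi⟩ := hx
  obtain ⟨s, t, hst⟩ := hv
  have hi' : x = factorAt u i x.length := hi
  exact mem_lang_of_factorAt_eq (hi'.symm.trans hst.symm)

lemma apply_append (φ : A → List A) (x y : List A) :
    Apply φ (x ++ y) = Apply φ x ++ Apply φ y := List.flatMap_append

lemma apply_nil (φ : A → List A) : Apply φ [] = [] := rfl

lemma apply_cons (φ : A → List A) (a : A) (x : List A) :
    Apply φ (a :: x) = φ a ++ Apply φ x := rfl

lemma apply_conj {ψ φ : A → List A} {v : List A} (h : LeftConj ψ φ v) (x : List A) :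
    Apply φ x ++ v = v ++ Apply ψ x := by
  induction x with
  | nil => simp [apply_nil]
  | cons a x ih =>
      rw [apply_cons, apply_cons, List.append_assoc, ih, ← List.append_assoc, h a,
        List.append_assoc]

lemma apply_length_ge {φ : A → List A} (h : ∀ a, φ a ≠ []) (x : List A) :
    x.length ≤ (Apply φ x).length := by
  induction x with
  | nil => simp [apply_nil]
  | cons a x ih =>
      rw [apply_cons]
      have : 1 ≤ (φ a).length := List.length_pos_iff.mpr (h a)
      simp only [List.length_append, List.length_cons]
      omega

lemma iter_apply_nil (φ : A → List A) (k : ℕ) : (Apply φ)^[k] [] = [] := by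
  induction k with
  | zero => rfl
  | succ k ih => rw [Function.iterate_succ_apply, apply_nil, ih]

lemma iter_apply_append (φ : A → List A) (k : ℕ) (x y : List A) :
    (Apply φ)^[k] (x ++ y) = (Apply φ)^[k] x ++ (Apply φ)^[k] y := by
  induction k generalizing x y with
  | zero => rfl
  | succ k ih => rw [Function.iterate_succ_apply, apply_append, ih,
      Function.iterate_succ_apply, Function.iterate_succ_apply]

/-- Fixed point: prefixes are mapped to prefixes, iterated. -/
lemma iter_pref {φ : A → List A} {u : ℕ → A} (hfix : IsFixedPoint φ u) (k : ℕ)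
    {v : List A} (hv : v = factorAt u 0 v.length) :
    (Apply φ)^[k] v = factorAt u 0 ((Apply φ)^[k] v).length := by
  induction k generalizing v with
  | zero => exact hv
  | succ k ih =>
      rw [Function.iterate_succ_apply]
      apply ih
      calc Apply φ v = Apply φ (factorAt u 0 v.length) := by rw [← hv]
        _ = factorAt u 0 (Apply φ (factorAt u 0 v.length)).length := hfix v.length
        _ = factorAt u 0 (Apply φ v).length := by rw [← hv]

/-- Language is closed under the morphism. -/
lemma lang_apply {φ : A → List A} {u : ℕ → A} (hfix : IsFixedPoint φ u)
    {v : List A} (hv : v ∈ Lang u) : Apply φ v ∈ Lang u := by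
  obtain ⟨i, hi⟩ := hv
  have hi' : v = factorAt u i v.length := hi
  have hpre : factorAt u 0 (i + v.length) = factorAt u 0 i ++ v := by
    rw [factorAt_add, Nat.zero_add, ← hi']
  have h1 : Apply φ (factorAt u 0 (i + v.length)) =
      factorAt u 0 (Apply φ (factorAt u 0 (i + v.length))).length := by
    have := iter_pref hfix 1 (v := factorAt u 0 (i + v.length)) (by rw [factorAt_length])
    simpa using this
  rw [hpre, apply_append] at h1
  exact mem_lang_of_factorAt_eq (s := Apply φ (factorAt u 0 i)) (t := [])
    (by rw [h1.symm, List.append_nil])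

end Helpers

section Helpers2
open ZDC
variable {A : Type*}

lemma factorAt_split (u : ℕ → A) (i n a b c : ℕ) (h : n = a + b + c) :
    factorAt u i n =
      factorAt u i a ++ (factorAt u (i + a) b ++ factorAt u (i + a + b) c) := by
  subst h
  rw [factorAt_add, factorAt_add, add_assoc, List.append_assoc]

lemma factorAt_middle_eq {u : ℕ → A} {i j n a b c : ℕ} (h : n = a + b + c)
    (hij : factorAt u i n = factorAt u j n) :
    factorAt u (i + a) b = factorAt u (j + a) b := by
  rw [factorAt_split u i n a b c h, factorAt_split u j n a b c h] at hij
  obtain ⟨-, h2⟩ := List.append_inj hij (by simp [factorAt_length])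
  exact (List.append_inj h2 (by simp [factorAt_length])).1

lemma prim_ne_nil {φ : A → List A} (hprim : Primitive φ) (a0 : A) :
    ∀ a, φ a ≠ [] := by
  obtain ⟨k, hk1, hk⟩ := hprim
  intro a hnil
  obtain ⟨k', rfl⟩ : ∃ k', k = k' + 1 := ⟨k - 1, by omega⟩
  have h1 : (Apply φ)^[k' + 1] [a] = [] := by
    rw [Function.iterate_succ_apply]
    have h0 : Apply φ [a] = [] := by simp [apply_cons, hnil, apply_nil]
    rw [h0, iter_apply_nil]
  have := hk a a0
  rw [h1] at this
  exact (List.not_mem_nil (a := a0)) this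

lemma apply_length_congr {φ ψ : A → List A} (h : ∀ a, (ψ a).length = (φ a).length)
    (x : List A) : (Apply ψ x).length = (Apply φ x).length := by
  induction x with
  | nil => rfl
  | cons a x ih => rw [apply_cons, apply_cons]; simp [h a, ih]

/-- Uniqueness of the conjugating word for `φL ▷ φR` when `Fst φL` is non-constant. -/
lemma conj_word_unique {φL φR : A → List A} (a0 : A)
    (hRne : ∀ a, φR a ≠ []) (hLne : ∀ a, φL a ≠ [])
    (hnc : ¬ ∀ a b, Fst φL a = Fst φL b)
    {v v' : List A} (h1 : LeftConj φL φR v) (h2 : LeftConj φL φR v') : v = v' := by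
  -- auxiliary: if both v and v ++ s0 conjugate, then s0 commutes with every φL a,
  -- and if s0 ≠ [] this forces Fst φL to be constant.
  have aux : ∀ (vv s0 : List A), LeftConj φL φR vv → LeftConj φL φR (vv ++ s0) →
      s0 = [] := by
    intro vv s0 g1 g2
    by_contra hs0
    obtain ⟨d, s0', rfl⟩ := List.exists_cons_of_ne_nil hs0
    have hcomm : ∀ a, φL a ++ d :: s0' = d :: s0' ++ φL a := by
      intro a
      have e1 := g1 a
      have e2 := g2 a
      rw [← List.append_assoc, e1, List.append_assoc, List.append_assoc] at e2
      exact List.append_cancel_left e2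
    apply hnc
    have hhead : ∀ a, Fst φL a = some d := by
      intro a
      obtain ⟨ca, ra, ha⟩ := List.exists_cons_of_ne_nil (hLne a)
      have hq := hcomm a
      rw [ha, List.cons_append, List.cons_append] at hq
      have : ca = d := (List.cons.injEq _ _ _ _ ▸ hq).1
      rw [Fst, ha, this]
      rfl
    intro a b; rw [hhead a, hhead b]
  -- both v and v' are prefixes of a long image
  set s := List.replicate (max v.length v'.length) a0 with hs
  have hslen : max v.length v'.length ≤ (Apply φR s).length := by
    have := apply_length_ge hRne s
    simpa [hs] using this
  have hpv : v <+: Apply φR s := by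
    apply List.prefix_of_prefix_length_le (l₃ := Apply φR s ++ v)
    · exact ⟨Apply φL s, (apply_conj h1 s).symm⟩
    · exact List.prefix_append _ _
    · simpa using le_trans (le_max_left _ _) hslen
  have hpv' : v' <+: Apply φR s := by
    apply List.prefix_of_prefix_length_le (l₃ := Apply φR s ++ v')
    · exact ⟨Apply φL s, (apply_conj h2 s).symm⟩
    · exact List.prefix_append _ _
    · simpa using le_trans (le_max_right _ _) hslen
  rcases List.prefix_or_prefix_of_prefix hpv hpv' with h | h
  · obtain ⟨s0, hs0⟩ := h
    have := aux v s0 h1 (hs0 ▸ h2)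
    rw [← hs0, this, List.append_nil]
  · obtain ⟨s0, hs0⟩ := h
    have := aux v' s0 h2 (hs0 ▸ h1)
    rw [← hs0, this, List.append_nil]

end Helpers2

section Helpers3
open ZDC
variable {A : Type*}

/-- Every factor of a fixed point of a primitive morphism (with ≥ 2 letters)
occurs at arbitrarily large positions. -/
lemma occurs_far {φ : A → List A} {u : ℕ → A} (hfix : IsFixedPoint φ u)
    {k : ℕ} (hk : ∀ a b : A, b ∈ (Apply φ)^[k] [a]) {a b : A} (hab : a ≠ b)
    {x : List A} (hx : x ∈ Lang u) (m : ℕ) : ∃ j, m ≤ j ∧ OccursAt u x j := by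
  have hblock : ∀ c : A, 2 ≤ ((Apply φ)^[k] [c]).length := by
    intro c
    by_contra hcon
    push_neg at hcon
    have ha := hk c a
    have hb := hk c b
    have h1 := List.length_pos_iff.mpr (List.ne_nil_of_mem ha)
    have hlen1 : ((Apply φ)^[k] [c]).length = 1 := by omega
    obtain ⟨d, hd⟩ := List.length_eq_one_iff.mp hlen1
    rw [hd] at ha hb
    simp at ha hb
    exact hab (ha.trans hb.symm)
  have hcons : ∀ (c : A) (l : List A),
      (Apply φ)^[k] (c :: l) = (Apply φ)^[k] [c] ++ (Apply φ)^[k] l := by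
    intro c l
    rw [← iter_apply_append]
    rfl
  have hlen2 : ∀ l : List A, 2 * l.length ≤ ((Apply φ)^[k] l).length := by
    intro l
    induction l with
    | nil => simp [iter_apply_nil]
    | cons c l ih =>
        rw [hcons, List.length_append, List.length_cons]
        have := hblock c
        omega
  have hgrow : ∀ (n : ℕ) (c : A), n + 1 ≤ ((Apply φ)^[k * n] [c]).length := by
    intro n
    induction n with
    | zero => intro c; simp
    | succ n ih =>
        intro c
        have he : k * (n + 1) = k + k * n := by ring
        rw [he, Function.iterate_add_apply]
        have h1 := hlen2 ((Apply φ)^[k * n] [c])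
        have h2 := ih c
        omega
  have hfa0 : ([u 0] : List A) = factorAt u 0 ([u 0] : List A).length :=
    (factorAt_one u 0).symm
  -- the first letter reoccurs at a positive position
  obtain ⟨p, hp0, hpa⟩ : ∃ p, 0 < p ∧ u p = u 0 := by
    have hP : (Apply φ)^[k] [u 0] = factorAt u 0 ((Apply φ)^[k] [u 0]).length :=
      iter_pref hfix k hfa0
    have hP2 : 2 ≤ ((Apply φ)^[k] [u 0]).length := hblock (u 0)
    obtain ⟨q', hq'⟩ : ∃ q', ((Apply φ)^[k] [u 0]).length = 1 + q' :=
      ⟨((Apply φ)^[k] [u 0]).length - 1, by omega⟩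
    have hq1 : 1 ≤ q' := by omega
    have hPsplit : (Apply φ)^[k] [u 0] = [u 0] ++ factorAt u 1 q' := by
      rw [hP, hq', factorAt_add, factorAt_one]
    have hrest : factorAt u 1 q' ≠ [] := by
      intro h
      have := factorAt_length u 1 q'
      rw [h] at this
      simp at this
      omega
    obtain ⟨r0, rest', hr⟩ := List.exists_cons_of_ne_nil hrest
    have hmem : u 0 ∈ (Apply φ)^[k] (factorAt u 1 q') := by
      rw [hr, hcons]
      exact List.mem_append_left _ (hk r0 (u 0))
    obtain ⟨s, t, hst⟩ := List.append_of_mem hmem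
    have hP2pref : (Apply φ)^[k] ((Apply φ)^[k] [u 0]) =
        factorAt u 0 ((Apply φ)^[k] ((Apply φ)^[k] [u 0])).length :=
      iter_pref hfix k hP
    have hP2eq : (Apply φ)^[k] ((Apply φ)^[k] [u 0]) =
        ((Apply φ)^[k] [u 0] ++ s) ++ [u 0] ++ t := by
      calc (Apply φ)^[k] ((Apply φ)^[k] [u 0])
          = (Apply φ)^[k] ([u 0] ++ factorAt u 1 q') := by rw [← hPsplit]
        _ = (Apply φ)^[k] [u 0] ++ (Apply φ)^[k] (factorAt u 1 q') := by
              rw [iter_apply_append]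
        _ = (Apply φ)^[k] [u 0] ++ (s ++ u 0 :: t) := by rw [hst]
        _ = ((Apply φ)^[k] [u 0] ++ s) ++ [u 0] ++ t := by simp
    have hocc := occurs_of_factorAt_eq (hP2pref.symm.trans hP2eq)
    have hocc' : ([u 0] : List A) =
        factorAt u (0 + ((Apply φ)^[k] [u 0] ++ s).length) 1 := hocc
    rw [factorAt_one] at hocc'
    simp at hocc'
    refine ⟨((Apply φ)^[k] [u 0]).length + s.length, ?_, hocc'.symm⟩
    have := hblock (u 0)
    omega
  -- now place x far away
  obtain ⟨i, hi⟩ := hx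
  have hi' : x = factorAt u i x.length := hi
  set n := m + i + x.length with hn
  obtain ⟨q', hq'⟩ : ∃ q', p = 1 + q' := ⟨p - 1, by omega⟩
  have hppre : factorAt u 0 p = [u 0] ++ factorAt u 1 q' := by
    rw [hq', factorAt_add, factorAt_one]
  have hQ : factorAt u 0 (p + 1) = factorAt u 0 p ++ ([u 0] ++ []) := by
    rw [factorAt_add, factorAt_one]
    simp [hpa]
  have hQpref : factorAt u 0 (p + 1) = factorAt u 0 (factorAt u 0 (p + 1)).length := by
    rw [factorAt_length]
  have himgpref := iter_pref hfix (k * n) hQpref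
  have himg : (Apply φ)^[k * n] (factorAt u 0 (p + 1)) =
      (Apply φ)^[k * n] (factorAt u 0 p) ++ (Apply φ)^[k * n] [u 0] ++ [] := by
    rw [hQ, iter_apply_append, iter_apply_append, iter_apply_nil]
    simp
  have hocc := occurs_of_factorAt_eq (himgpref.symm.trans himg)
  rw [Nat.zero_add] at hocc
  set q := ((Apply φ)^[k * n] (factorAt u 0 p)).length with hqdef
  set Pn := (Apply φ)^[k * n] [u 0] with hPndef
  have hPnocc : Pn = factorAt u q Pn.length := hocc
  have hPnpref : Pn = factorAt u 0 Pn.length := iter_pref hfix (k * n) hfa0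
  have hPnlen : n + 1 ≤ Pn.length := hgrow n (u 0)
  have hqge : n + 1 ≤ q := by
    have hb1 : (Apply φ)^[k * n] (factorAt u 0 p) =
        Pn ++ (Apply φ)^[k * n] (factorAt u 1 q') := by
      rw [hppre, iter_apply_append]
    have := congrArg List.length hb1
    rw [List.length_append] at this
    omega
  obtain ⟨r, hr⟩ : ∃ r, Pn.length = i + x.length + r :=
    ⟨Pn.length - i - x.length, by omega⟩
  have hmid := factorAt_middle_eq (u := u) (i := 0) (j := q) hr
    (hPnpref.symm.trans hPnocc)
  rw [Nat.zero_add] at hmid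
  exact ⟨q + i, by omega, hi'.trans hmid⟩

end Helpers3

open ZDC in
/-- Let `φ` be a primitive well-marked morphism with
`Fst(φL) = Lst(φR) = Id`, `u` a palindromic fixed point of `φ`, `w` the conjugate word of
`φL ▷ φR` and `Φ(x) = φR(x)w`. Then `x ∈ L(u)` implies `Φ(x) ∈ L(u)`. -/
theorem stmt_12 {A : Type*} [Fintype A] (φ φL φR : A → List A) (w : List A) (u : ℕ → A)
    (hprim : Primitive φ) (hacyclic : ¬ Cyclic φ)
    (hLm : IsLeftmostConj φL φ) (hRm : IsRightmostConj φR φ)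
    (hFst : ∀ a, Fst φL a = some a) (hLst : ∀ a, Lst φR a = some a)
    (hfix : IsFixedPoint φ u) (hpal : Palindromic u)
    (hconj : LeftConj φL φR w) :
    ∀ x ∈ Lang u, Apply φR x ++ w ∈ Lang u := by
  obtain ⟨wL, hwL⟩ := hLm.1
  obtain ⟨wR, hwR⟩ := hRm.1
  have hφne : ∀ a, φ a ≠ [] := prim_ne_nil hprim (u 0)
  have hlenR : ∀ a, (φR a).length = (φ a).length := by
    intro a
    have := congrArg List.length (hwR a)
    simp only [List.length_append] at this
    omega
  have hlenL : ∀ a, (φL a).length = (φ a).length := by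
    intro a
    have := congrArg List.length (hwL a)
    simp only [List.length_append] at this
    omega
  have hφRne : ∀ a, φR a ≠ [] := by
    intro a h
    apply hφne a
    have h1 := hlenR a
    rw [h] at h1
    simp only [List.length_nil] at h1
    exact List.length_eq_zero_iff.mp h1.symm
  have hφLne : ∀ a, φL a ≠ [] := by
    intro a h
    apply hφne a
    have h1 := hlenL a
    rw [h] at h1
    simp only [List.length_nil] at h1
    exact List.length_eq_zero_iff.mp h1.symm
  have hw' : LeftConj φL φR (wR ++ wL) := by
    intro a
    calc φR a ++ (wR ++ wL) = (φR a ++ wR) ++ wL := by rw [List.append_assoc]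
      _ = (wR ++ φ a) ++ wL := by rw [hwR a]
      _ = wR ++ (φ a ++ wL) := by rw [List.append_assoc]
      _ = wR ++ (wL ++ φL a) := by rw [hwL a]
      _ = (wR ++ wL) ++ φL a := by rw [List.append_assoc]
  have hw : w = wR ++ wL := conj_word_unique (u 0) hφRne hφLne hLm.2 hconj hw'
  intro x hx
  obtain ⟨k, hk1, hk⟩ := hprim
  obtain ⟨a, b, hab⟩ : ∃ a b : A, a ≠ b := by
    by_contra hcon
    push_neg at hcon
    exact hLm.2 (fun a b => by rw [hcon a b])
  obtain ⟨j, hjm, hj⟩ := occurs_far hfix hk hab hx wR.length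
  have hj' : x = factorAt u j x.length := hj
  have hij : j - wR.length + wR.length = j := by omega
  have hy_eq : factorAt u (j - wR.length) (wR.length + (x.length + wL.length)) =
      factorAt u (j - wR.length) wR.length ++
        (x ++ factorAt u (j + x.length) wL.length) := by
    rw [factorAt_add, factorAt_add, hij, ← hj']
  have hy : factorAt u (j - wR.length) wR.length ++
      (x ++ factorAt u (j + x.length) wL.length) ∈ Lang u :=
    hy_eq ▸ factorAt_mem_lang u _ _
  have him := lang_apply hfix hy
  rw [apply_append, apply_append] at him
  -- wR is a suffix of the image of the left context
  have hzlen : wR.length ≤ (Apply φ (factorAt u (j - wR.length) wR.length)).length := by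
    have h1 := apply_length_ge hφne (factorAt u (j - wR.length) wR.length)
    rw [factorAt_length] at h1
    exact h1
  obtain ⟨t0, ht0⟩ : ∃ t0, Apply φ (factorAt u (j - wR.length) wR.length) = t0 ++ wR := by
    set Z := Apply φ (factorAt u (j - wR.length) wR.length) with hZ
    have hZZ : (Apply φ (factorAt u (j - wR.length) wR.length)).length = Z.length := by
      rw [hZ]
    refine ⟨Z.take (Z.length - wR.length), ?_⟩
    have hsplit := List.take_append_drop (Z.length - wR.length) Z
    have e : Apply φR (factorAt u (j - wR.length) wR.length) ++ wR =
        (wR ++ Z.take (Z.length - wR.length)) ++ Z.drop (Z.length - wR.length) := by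
      rw [List.append_assoc, hsplit, apply_conj hwR]
    have hlen : (Apply φR (factorAt u (j - wR.length) wR.length)).length =
        (wR ++ Z.take (Z.length - wR.length)).length := by
      rw [apply_length_congr hlenR]
      simp only [List.length_append, List.length_take]
      omega
    obtain ⟨-, h2⟩ := List.append_inj e hlen
    rw [← h2] at hsplit
    exact hsplit.symm
  -- wL is a prefix of the image of the right context
  have hz'len : wL.length ≤ (Apply φ (factorAt u (j + x.length) wL.length)).length := by
    have h1 := apply_length_ge hφne (factorAt u (j + x.length) wL.length)
    rw [factorAt_length] at h1
    exact h1
  obtain ⟨t1, ht1⟩ : ∃ t1, Apply φ (factorAt u (j + x.length) wL.length) = wL ++ t1 := by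
    set Z := Apply φ (factorAt u (j + x.length) wL.length) with hZ
    refine ⟨Z.drop wL.length, ?_⟩
    have hsplit := List.take_append_drop wL.length Z
    have e : Z.take wL.length ++ (Z.drop wL.length ++ wL) = wL ++ Apply φL (factorAt u (j + x.length) wL.length) := by
      rw [← List.append_assoc, hsplit, hZ, apply_conj hwL]
    have hlen : (Z.take wL.length).length = wL.length := by
      simp only [List.length_take]
      omega
    obtain ⟨h1, -⟩ := List.append_inj e hlen
    rw [h1] at hsplit
    exact hsplit.symm
  have hmem : wR ++ (Apply φ x ++ wL) ∈ Lang u := by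
    apply infix_mem_lang him
    refine ⟨t0, t1, ?_⟩
    rw [ht0, ht1]
    simp [List.append_assoc]
  rw [hw]
  have hfin : Apply φR x ++ (wR ++ wL) = wR ++ (Apply φ x ++ wL) := by
    rw [← List.append_assoc, apply_conj hwR x, List.append_assoc]
  rw [hfin]
  exact hmem
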